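/- arXiv:2103.15942 — 2 statements merged into one kernel-verified Lean document; each statement's English description precedes it below -/
import Mathlib

section
/- The Laplace mechanism M(D) = f(D) + Lap(Δf/ε), where f is a real-valued function with global sensitivity Δf (i.e., |f(D) - f(D')| ≤ Δf for all neighboring D, D'), satisfies ε-differential privacy: for all neighboring D, D' and all measurable O, Pr[M(D) ∈ O] ≤ e^ε Pr[M(D') ∈ O]. -/
open MeasureTheory ProbabilityTheory Real

/-- Density of the mean-zero Laplace distribution with scale `b`. -/
noncomputable def laplaceDensity (b x : ℝ) : ℝ := (1 / (2 * b)) * Real.exp (-|x| / b)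

/-- The mean-zero Laplace distribution with scale `b`, as a measure on `ℝ`. -/
noncomputable def laplaceMeasure (b : ℝ) : Measure ℝ :=
  MeasureTheory.volume.withDensity (fun x => ENNReal.ofReal (laplaceDensity b x))

/-- `ε`-differential privacy for a mechanism `M` with respect to a
neighboring relation `N` on inputs. -/
def DP {X Ω : Type*} [MeasurableSpace Ω] (N : X → X → Prop) (ε : ℝ)
    (M : X → Measure Ω) : Prop :=
  ∀ x y, N x y → ∀ s : Set Ω, MeasurableSet s →
    M x s ≤ ENNReal.ofReal (Real.exp ε) * M y s

lemma laplace_map_apply (b c : ℝ) {s : Set ℝ} (hs : MeasurableSet s) :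
    (laplaceMeasure b).map (fun z => c + z) s
      = ∫⁻ t, s.indicator (fun t => ENNReal.ofReal (laplaceDensity b (t - c))) t := by
  rw [Measure.map_apply (measurable_const_add c) hs, laplaceMeasure,
    withDensity_apply _ (hs.preimage (measurable_const_add c)),
    ← lintegral_indicator (hs.preimage (measurable_const_add c))]
  have : ∀ z : ℝ, ((fun z => c + z) ⁻¹' s).indicator
      (fun z => ENNReal.ofReal (laplaceDensity b z)) z
      = s.indicator (fun t => ENNReal.ofReal (laplaceDensity b (t - c))) (c + z) := by
    intro z
    by_cases h : c + z ∈ s <;>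
      simp [Set.indicator, Set.mem_preimage, h]
  simp_rw [this]
  exact lintegral_add_left_eq_self
    (s.indicator (fun t => ENNReal.ofReal (laplaceDensity b (t - c)))) c

/-- The Laplace mechanism `M(D) = f(D) + Lap(Δ/ε)` for a function `f` of global
sensitivity `Δ` is `ε`-differentially private. -/
theorem stmt_8 {X : Type*} (N : X → X → Prop) (f : X → ℝ) (Δ ε : ℝ)
    (hΔ : 0 < Δ) (hε : 0 < ε)
    (hsens : ∀ x y, N x y → |f x - f y| ≤ Δ) :
    DP N ε (fun x => (laplaceMeasure (Δ / ε)).map (fun z => f x + z)) := by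
  intro x y hN s hs
  set b := Δ / ε with hb
  have hbpos : 0 < b := div_pos hΔ hε
  simp only [laplace_map_apply b _ hs]
  rw [← lintegral_const_mul' _ _ ENNReal.ofReal_ne_top]
  apply lintegral_mono
  intro t
  by_cases h : t ∈ s
  · simp only [Set.indicator_of_mem h]
    rw [← ENNReal.ofReal_mul (le_of_lt (Real.exp_pos ε))]
    apply ENNReal.ofReal_le_ofReal
    unfold laplaceDensity
    rw [← mul_assoc, mul_comm (Real.exp ε), mul_assoc, ← Real.exp_add]
    apply mul_le_mul_of_nonneg_left _ (by positivity)
    apply Real.exp_le_exp.mpr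
    have habs : |t - f y| - |t - f x| ≤ Δ := by
      have := abs_sub_abs_le_abs_sub (t - f y) (t - f x)
      have h2 : |(t - f y) - (t - f x)| = |f x - f y| := by
        rw [show (t - f y) - (t - f x) = f x - f y by ring]
      linarith [hsens x y hN]
    have hbε : ε * b = Δ := by rw [hb]; field_simp
    rw [div_le_iff₀ hbpos, add_mul, div_mul_cancel₀ _ (ne_of_gt hbpos)]
    linarith
  · simp [Set.indicator_of_notMem h]
end

section
/- Consider the Above-Noisy-Threshold (sparse vector) mechanism M on a stream of counts: sample θ̃ = θ + Lap(2/ε), and at each step i compute c_i (a running count of sensitivity 1 across neighboring streams) and v_i ~ Lap(4/ε); output ⊤ and halt the first time c_i + v_i ≥ θ̃, outputting ⊥ otherwise. Then M is ε-differentially private: for any output sequence O = (⊥,...,⊥,⊤) of length m and neighboring streams U, U', Pr[M(U) = O] ≤ e^ε Pr[M(U') = O]. -/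
open MeasureTheory ProbabilityTheory Real
open scoped ENNReal

lemma laplaceDensity_nonneg {b : ℝ} (hb : 0 < b) (x : ℝ) : 0 ≤ laplaceDensity b x := by
  unfold laplaceDensity
  positivity

lemma laplaceDensity_shift_le {b : ℝ} (hb : 0 < b) (t x : ℝ) :
    laplaceDensity b (x - t) ≤ Real.exp (|t| / b) * laplaceDensity b x := by
  unfold laplaceDensity
  rw [show Real.exp (|t| / b) * ((1 / (2 * b)) * Real.exp (-|x| / b))
      = (1 / (2 * b)) * (Real.exp (|t| / b) * Real.exp (-|x| / b)) by ring,
    ← Real.exp_add]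
  have h1 : (0:ℝ) < 1 / (2 * b) := by positivity
  have habs : |x| - |t| ≤ |x - t| := by
    have := abs_sub_abs_le_abs_sub x t
    linarith
  have : -|x - t| / b ≤ |t| / b + -|x| / b := by
    rw [← add_div]
    exact (div_le_div_iff_of_pos_right hb).2 (by linarith)
  exact mul_le_mul_of_nonneg_left (Real.exp_le_exp.2 this) (le_of_lt h1)

lemma laplaceMeasure_map_add_le {b : ℝ} (hb : 0 < b) (t : ℝ) :
    (laplaceMeasure b).map (· + t) ≤ ENNReal.ofReal (Real.exp (|t| / b)) • laplaceMeasure b := by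
  refine Measure.le_iff.2 fun s hs => ?_
  have hd : Measurable fun x => ENNReal.ofReal (laplaceDensity b x) := by
    unfold laplaceDensity
    fun_prop
  rw [Measure.map_apply (measurable_add_const t) hs, laplaceMeasure,
    withDensity_apply _ ((measurable_add_const t) hs), Measure.smul_apply,
    withDensity_apply _ hs, smul_eq_mul]
  calc ∫⁻ x in (· + t) ⁻¹' s, ENNReal.ofReal (laplaceDensity b x)
      = ∫⁻ x, ((· + t) ⁻¹' s).indicator (fun x => ENNReal.ofReal (laplaceDensity b x)) x := by
        rw [lintegral_indicator ((measurable_add_const t) hs) _]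
    _ = ∫⁻ x, s.indicator (fun y => ENNReal.ofReal (laplaceDensity b (y - t))) (x + t) := by
        congr 1; ext x
        by_cases hx : x + t ∈ s <;> simp [Set.indicator, hx, Set.mem_preimage]
    _ = ∫⁻ y, s.indicator (fun y => ENNReal.ofReal (laplaceDensity b (y - t))) y :=
        lintegral_add_right_eq_self _ t
    _ = ∫⁻ y in s, ENNReal.ofReal (laplaceDensity b (y - t)) := by
        rw [lintegral_indicator hs _]
    _ ≤ ∫⁻ y in s, ENNReal.ofReal (Real.exp (|t| / b)) * ENNReal.ofReal (laplaceDensity b y) := by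
        refine lintegral_mono fun y => ?_
        rw [← ENNReal.ofReal_mul (Real.exp_nonneg _)]
        exact ENNReal.ofReal_le_ofReal (laplaceDensity_shift_le hb t y)
    _ = ENNReal.ofReal (Real.exp (|t| / b)) * ∫⁻ y in s, ENNReal.ofReal (laplaceDensity b y) :=
        lintegral_const_mul _ hd

lemma prod_le_smul_prod {α β : Type*} [MeasurableSpace α] [MeasurableSpace β]
    {μ μ' : Measure α} {ν ν' : Measure β} [SFinite ν] [SFinite ν']
    {a b : ℝ≥0∞} (hμ : μ' ≤ a • μ) (hν : ν' ≤ b • ν) :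
    μ'.prod ν' ≤ (a * b) • μ.prod ν := by
  refine Measure.le_iff.2 fun s hs => ?_
  rw [Measure.prod_apply hs, Measure.smul_apply, Measure.prod_apply hs, smul_eq_mul]
  calc ∫⁻ x, ν' (Prod.mk x ⁻¹' s) ∂μ'
      ≤ ∫⁻ x, b * ν (Prod.mk x ⁻¹' s) ∂μ' := by
        refine lintegral_mono fun x => ?_
        simpa using Measure.le_iff'.1 hν (Prod.mk x ⁻¹' s)
    _ = b * ∫⁻ x, ν (Prod.mk x ⁻¹' s) ∂μ' :=
        lintegral_const_mul _ (measurable_measure_prodMk_left hs)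
    _ ≤ b * ∫⁻ x, ν (Prod.mk x ⁻¹' s) ∂(a • μ) :=
        mul_le_mul_right (lintegral_mono' hμ le_rfl) _
    _ = a * b * ∫⁻ x, ν (Prod.mk x ⁻¹' s) ∂μ := by
        rw [lintegral_smul_measure]; ring

/-- The Above-Noisy-Threshold (sparse vector) mechanism is `ε`-DP: for
neighboring streams of counts `c`, `c'` (with `|cᵢ - c'ᵢ| ≤ 1`), the
probability of halting exactly at step `m` (outputting `⊥,…,⊥,⊤`) changes by
at most a factor `e^ε`.  Here `W 0` is the threshold noise `Lap(2/ε)` and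
`W (i+1)` is the per-step noise `vᵢ ~ Lap(4/ε)`. -/
theorem stmt_12 {Ω : Type*} [MeasurableSpace Ω] (μ : Measure Ω) [IsProbabilityMeasure μ]
    (ε θ : ℝ) (hε : 0 < ε)
    (W : ℕ → Ω → ℝ) (hmeas : ∀ n, Measurable (W n))
    (hindep : iIndepFun W μ)
    (hlaw0 : μ.map (W 0) = laplaceMeasure (2 / ε))
    (hlaw : ∀ n, μ.map (W (n + 1)) = laplaceMeasure (4 / ε))
    (c c' : ℕ → ℝ) (hneighbor : ∀ i, |c i - c' i| ≤ 1)
    (m : ℕ) :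
    μ {ω | (∀ i < m, c i + W (i + 1) ω < θ + W 0 ω) ∧ θ + W 0 ω ≤ c m + W (m + 1) ω}
      ≤ ENNReal.ofReal (Real.exp ε) *
        μ {ω | (∀ i < m, c' i + W (i + 1) ω < θ + W 0 ω) ∧
            θ + W 0 ω ≤ c' m + W (m + 1) ω} := by
  have hb2 : (0:ℝ) < 2 / ε := by positivity
  have hb4 : (0:ℝ) < 4 / ε := by positivity
  set Z : Ω → ℝ := W 0 with hZdef
  set Y : Ω → ℝ := W (m + 1) with hYdef
  set V : Ω → (Fin m → ℝ) := fun ω i => W (i + 1) ω with hVdef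
  have hZ : Measurable Z := hmeas 0
  have hY : Measurable Y := hmeas (m + 1)
  have hV : Measurable V := measurable_pi_lambda _ fun i => hmeas _
  -- independence
  have hne : (0:ℕ) ≠ m + 1 := by omega
  have hZY : IndepFun Z Y μ := hindep.indepFun hne
  have hpairV : IndepFun (fun ω => (Z ω, Y ω)) V μ := by
    have hdisj : Disjoint ({0, m + 1} : Finset ℕ) (Finset.Ioo 0 (m + 1)) := by
      simp [Finset.disjoint_left, Finset.mem_Ioo]
    have h := hindep.indepFun_finset {0, m + 1} (Finset.Ioo 0 (m + 1)) hdisj hmeas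
    have h0mem : (0 : ℕ) ∈ ({0, m + 1} : Finset ℕ) := by simp
    have hmmem : (m + 1 : ℕ) ∈ ({0, m + 1} : Finset ℕ) := by simp
    have hmem : ∀ i : Fin m, (i : ℕ) + 1 ∈ Finset.Ioo 0 (m + 1) := by
      intro i; simp [Finset.mem_Ioo]
    have := h.comp
      (φ := fun x : ({y // y ∈ ({0, m+1} : Finset ℕ)} → ℝ) => (x ⟨0, h0mem⟩, x ⟨m+1, hmmem⟩))
      (ψ := fun x : ({y // y ∈ Finset.Ioo 0 (m+1)} → ℝ) => fun i : Fin m => x ⟨(i:ℕ)+1, hmem i⟩)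
      (show Measurable (fun x : ({y // y ∈ ({0, m+1} : Finset ℕ)} → ℝ) => (x ⟨0, h0mem⟩, x ⟨m+1, hmmem⟩)) from
        (measurable_pi_apply _).prodMk (measurable_pi_apply _))
      (measurable_pi_lambda _ fun i => measurable_pi_apply _)
    exact this
  -- laws
  have hlap2prob : IsProbabilityMeasure (laplaceMeasure (2/ε)) :=
    hlaw0 ▸ Measure.isProbabilityMeasure_map hZ.aemeasurable
  have hlap4prob : IsProbabilityMeasure (laplaceMeasure (4/ε)) :=
    (hlaw m) ▸ Measure.isProbabilityMeasure_map hY.aemeasurable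
  have hκprob : IsProbabilityMeasure (μ.map V) := Measure.isProbabilityMeasure_map hV.aemeasurable
  have law_pair : μ.map (fun ω => (Z ω, Y ω))
      = (laplaceMeasure (2/ε)).prod (laplaceMeasure (4/ε)) := by
    rw [(indepFun_iff_map_prod_eq_prod_map_map hZ.aemeasurable hY.aemeasurable).1 hZY,
      hZdef, hYdef, hlaw0, hlaw m]
  have law_joint : μ.map (fun ω => ((Z ω, Y ω), V ω))
      = ((laplaceMeasure (2/ε)).prod (laplaceMeasure (4/ε))).prod (μ.map V) := by
    rw [(indepFun_iff_map_prod_eq_prod_map_map (hZ.prodMk hY).aemeasurable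
      hV.aemeasurable).1 hpairV, law_pair]
  -- the sets
  set S : (ℕ → ℝ) → Set ((ℝ × ℝ) × (Fin m → ℝ)) := fun d =>
    {p | (∀ i : Fin m, d i + p.2 i < θ + p.1.1) ∧ θ + p.1.1 ≤ d m + p.1.2} with hSdef
  have hSmeas : ∀ d, MeasurableSet (S d) := by
    intro d
    have hsplit : S d = (⋂ i : Fin m, {p : (ℝ × ℝ) × (Fin m → ℝ) | d i + p.2 i < θ + p.1.1})
        ∩ {p : (ℝ × ℝ) × (Fin m → ℝ) | θ + p.1.1 ≤ d m + p.1.2} := by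
      ext p
      simp [hSdef, Set.mem_iInter, Set.mem_setOf_eq]
    rw [hsplit]
    exact (MeasurableSet.iInter fun i => measurableSet_lt (by fun_prop) (by fun_prop)).inter
      (measurableSet_le (by fun_prop) (by fun_prop))
  have hΦ : Measurable (fun ω => ((Z ω, Y ω), V ω)) := (hZ.prodMk hY).prodMk hV
  have hev : ∀ d : ℕ → ℝ,
      {ω | (∀ i < m, d i + W (i + 1) ω < θ + W 0 ω) ∧ θ + W 0 ω ≤ d m + W (m + 1) ω}
        = (fun ω => ((Z ω, Y ω), V ω)) ⁻¹' S d := by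
    intro d; ext ω
    simp only [Set.mem_setOf_eq, Set.mem_preimage, hSdef]
    constructor
    · rintro ⟨h1, h2⟩; exact ⟨fun i => h1 i i.isLt, h2⟩
    · rintro ⟨h1, h2⟩; exact ⟨fun i hi => h1 ⟨i, hi⟩, h2⟩
  have hμev : ∀ d : ℕ → ℝ,
      μ {ω | (∀ i < m, d i + W (i + 1) ω < θ + W 0 ω) ∧ θ + W 0 ω ≤ d m + W (m + 1) ω}
        = (((laplaceMeasure (2/ε)).prod (laplaceMeasure (4/ε))).prod (μ.map V)) (S d) := by
    intro d
    rw [hev d, ← law_joint, Measure.map_apply hΦ (hSmeas d)]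
  rw [hμev c, hμev c']
  -- the shift map
  set T : (ℝ × ℝ) × (Fin m → ℝ) → (ℝ × ℝ) × (Fin m → ℝ) :=
    fun p => ((p.1.1 + 1, p.1.2 + 2), p.2) with hTdef
  have hT : Measurable T := by fun_prop
  have hsub : S c ⊆ T ⁻¹' S c' := by
    rintro ⟨⟨z, y⟩, v⟩ hp
    simp only [hSdef, Set.mem_setOf_eq] at hp
    obtain ⟨h1, h2⟩ := hp
    simp only [Set.mem_preimage, hTdef, hSdef, Set.mem_setOf_eq]
    have hcm := abs_le.1 (hneighbor m)
    constructor
    · intro i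
      have := h1 i
      have hci := abs_le.1 (hneighbor i)
      linarith
    · linarith
  set Λ := ((laplaceMeasure (2/ε)).prod (laplaceMeasure (4/ε))).prod (μ.map V) with hΛdef
  have hmapT : Λ.map T = (((laplaceMeasure (2/ε)).map (· + 1)).prod
      ((laplaceMeasure (4/ε)).map (· + 2))).prod ((μ.map V).map id) := by
    rw [Measure.map_prod_map _ _ (measurable_add_const 1) (measurable_add_const 2),
      Measure.map_prod_map _ _ ((measurable_add_const 1).prodMap (measurable_add_const 2))
      measurable_id]
    rfl
  have hshift2 : (laplaceMeasure (2/ε)).map (· + 1)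
      ≤ ENNReal.ofReal (Real.exp (ε/2)) • laplaceMeasure (2/ε) := by
    have := laplaceMeasure_map_add_le hb2 1
    rwa [show |(1:ℝ)| / (2 / ε) = ε / 2 by rw [abs_one]; field_simp] at this
  have hshift4 : (laplaceMeasure (4/ε)).map (· + 2)
      ≤ ENNReal.ofReal (Real.exp (ε/2)) • laplaceMeasure (4/ε) := by
    have := laplaceMeasure_map_add_le hb4 2
    rwa [show |(2:ℝ)| / (4 / ε) = ε / 2 by rw [show |(2:ℝ)| = 2 by norm_num]; field_simp; ring] at this
  have hid : (μ.map V).map id ≤ (1 : ℝ≥0∞) • (μ.map V) := by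
    rw [Measure.map_id, one_smul]
  have hprodle : Λ.map T ≤ (ENNReal.ofReal (Real.exp ε)) • Λ := by
    rw [hmapT, hΛdef]
    have h1 : IsProbabilityMeasure ((laplaceMeasure (4/ε)).map (· + 2)) :=
      Measure.isProbabilityMeasure_map (measurable_add_const 2).aemeasurable
    have := prod_le_smul_prod (prod_le_smul_prod hshift2 hshift4) hid
    have heq : (ENNReal.ofReal (Real.exp (ε/2)) * ENNReal.ofReal (Real.exp (ε/2))) * 1
        = ENNReal.ofReal (Real.exp ε) := by
      rw [mul_one, ← ENNReal.ofReal_mul (Real.exp_nonneg _), ← Real.exp_add]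
      norm_num
    rwa [heq] at this
  calc Λ (S c) ≤ Λ (T ⁻¹' S c') := measure_mono hsub
    _ = (Λ.map T) (S c') := (Measure.map_apply hT (hSmeas c')).symm
    _ ≤ (ENNReal.ofReal (Real.exp ε) • Λ) (S c') := Measure.le_iff'.1 hprodle _
    _ = ENNReal.ofReal (Real.exp ε) * Λ (S c') := by rw [Measure.smul_apply, smul_eq_mul]
end
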